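/- Let (Ω, 𝓕, P) be a probability space, let 𝒢₁, …, 𝒢ₙ be sub-σ-algebras of 𝓕, let S₁, …, Sₙ : Ω → ℝ^d be random vectors with E[‖Sᵢ‖²] < ∞, and let F₁, …, Fₙ : Ω → ℝ be random variables with E[Fᵢ² ‖Sᵢ‖²] < ∞ for all i. Assume the cross-term orthogonality conditions: for all i ≠ j and every bounded 𝒢ᵢ-measurable random variable β : Ω → ℝ, E[β ⟨Sᵢ, Sⱼ⟩ | 𝒢ⱼ] = 0 almost surely. Assume also that E[‖Sᵢ‖² | 𝒢ᵢ] > 0 almost surely for each i. Define ĝ_sf := ∑ᵢ Fᵢ Sᵢ and, for each i, the baseline βᵢ* := E[⟨ĝ_sf, Sᵢ⟩ | 𝒢ᵢ] / E[‖Sᵢ‖² | 𝒢ᵢ]. Then for any random variables b₁, …, bₙ : Ω → ℝ with each bᵢ being 𝒢ᵢ-measurable and E[bᵢ² ‖Sᵢ‖²] < ∞, one has E[‖∑ᵢ (Fᵢ − bᵢ) Sᵢ‖²] ≥ E[‖∑ᵢ (Fᵢ − βᵢ*) Sᵢ‖²]. That is, βᵢ* are the baselines minimizing the second moment of the baselined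 gradient estimator. -/

import Mathlib

open MeasureTheory
open scoped RealInnerProductSpace

set_option linter.unusedSectionVars false

section Helpers

variable {Ω : Type*} {m m0 : MeasurableSpace Ω} {μ : Measure Ω} [IsProbabilityMeasure μ]
variable {d : ℕ}

/-- pull-out for integrals: ∫ h f = ∫ h E[f|m]. -/
theorem my_integral_pullout (hm : m ≤ m0) {h f : Ω → ℝ}
    (hh : StronglyMeasurable[m] h) (hf : Integrable f μ)
    (hhf : Integrable (fun ω => h ω * f ω) μ) :
    ∫ ω, h ω * f ω ∂μ = ∫ ω, h ω * (μ[f|m]) ω ∂μ := by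
  have h1 : μ[fun ω => h ω * f ω|m] =ᵐ[μ] fun ω => h ω * (μ[f|m]) ω := by
    have := condExp_mul_of_stronglyMeasurable_left (μ := μ) hh (f := h) (g := f) hhf hf
    exact this
  rw [← integral_condExp hm (f := fun ω => h ω * f ω)]
  exact integral_congr_ae h1

/-- membership in L² for c • S given integrability of c²‖S‖². -/
theorem my_memL2_smul {c : Ω → ℝ} {S : Ω → EuclideanSpace ℝ (Fin d)}
    (hc : AEStronglyMeasurable c μ) (hS : AEStronglyMeasurable S μ)
    (hint : Integrable (fun ω => (c ω) ^ 2 * ‖S ω‖ ^ 2) μ) :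
    MemLp (fun ω => c ω • S ω) 2 μ := by
  refine (memLp_two_iff_integrable_sq_norm (hc.smul hS)).2 ?_
  refine hint.congr ?_
  filter_upwards with ω
  rw [Pi.smul_apply', norm_smul, mul_pow, Real.norm_eq_abs, sq_abs]

/-- integrability of the inner product of two L² functions. -/
theorem my_integrable_inner {u v : Ω → EuclideanSpace ℝ (Fin d)}
    (hu : MemLp u 2 μ) (hv : MemLp v 2 μ) :
    Integrable (fun ω => ⟪u ω, v ω⟫) μ := by
  have hu2 : Integrable (fun ω => ‖u ω‖ ^ 2) μ :=
    (memLp_two_iff_integrable_sq_norm hu.aestronglyMeasurable).1 hu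
  have hv2 : Integrable (fun ω => ‖v ω‖ ^ 2) μ :=
    (memLp_two_iff_integrable_sq_norm hv.aestronglyMeasurable).1 hv
  have h1 : Integrable (fun ω => ‖u ω‖ * ‖v ω‖) μ := by
    refine ((hu2.add hv2).const_mul (1/2 : ℝ)).mono'
      (hu.aestronglyMeasurable.norm.mul hv.aestronglyMeasurable.norm) ?_
    filter_upwards with ω
    rw [Real.norm_eq_abs, abs_of_nonneg (by positivity)]
    simp only [Pi.add_apply]
    nlinarith [sq_nonneg (‖u ω‖ - ‖v ω‖), norm_nonneg (u ω), norm_nonneg (v ω)]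
  refine h1.mono' ((hu.aestronglyMeasurable.inner hv.aestronglyMeasurable)) ?_
  filter_upwards with ω
  simpa using abs_real_inner_le_norm (u ω) (v ω)

end Helpers

section Helpers2
variable {Ω : Type*} {m m0 : MeasurableSpace Ω} {μ : Measure Ω} [IsProbabilityMeasure μ]
variable {d : ℕ}

theorem my_integrable_weighted {c e : Ω → ℝ} {Si Sj : Ω → EuclideanSpace ℝ (Fin d)}
    (hc : AEStronglyMeasurable c μ) (he : AEStronglyMeasurable e μ)
    (hSi : AEStronglyMeasurable Si μ) (hSj : AEStronglyMeasurable Sj μ)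
    (hci : Integrable (fun ω => (c ω) ^ 2 * ‖Si ω‖ ^ 2) μ)
    (hej : Integrable (fun ω => (e ω) ^ 2 * ‖Sj ω‖ ^ 2) μ) :
    Integrable (fun ω => c ω * e ω * ⟪Si ω, Sj ω⟫) μ := by
  have := my_integrable_inner (my_memL2_smul hc hSi hci) (my_memL2_smul he hSj hej)
  refine this.congr ?_
  filter_upwards with ω
  rw [real_inner_smul_left, real_inner_smul_right]; ring

/-- conditional Cauchy-Schwarz. -/
theorem my_condexp_cs (hm : m ≤ m0) {g S : Ω → EuclideanSpace ℝ (Fin d)}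
    (hg : MemLp g 2 μ) (hS : MemLp S 2 μ) :
    ∀ᵐ ω ∂μ, ((μ[fun ω' => ⟪g ω', S ω'⟫|m]) ω) ^ 2 ≤
      (μ[fun ω' => ‖g ω'‖ ^ 2|m]) ω * (μ[fun ω' => ‖S ω'‖ ^ 2|m]) ω := by
  have hinner : Integrable (fun ω => ⟪g ω, S ω⟫) μ := my_integrable_inner hg hS
  have hg2 : Integrable (fun ω => ‖g ω‖ ^ 2) μ :=
    (memLp_two_iff_integrable_sq_norm hg.aestronglyMeasurable).1 hg
  have hS2 : Integrable (fun ω => ‖S ω‖ ^ 2) μ :=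
    (memLp_two_iff_integrable_sq_norm hS.aestronglyMeasurable).1 hS
  set N := μ[fun ω' => ⟪g ω', S ω'⟫|m] with hN
  set A := μ[fun ω' => ‖g ω'‖ ^ 2|m] with hA
  set K := μ[fun ω' => ‖S ω'‖ ^ 2|m] with hK
  have hq : ∀ q : ℚ, ∀ᵐ ω ∂μ,
      2 * (q : ℝ) * N ω ≤ (q : ℝ) ^ 2 * A ω + K ω := by
    intro q
    have hmono := condExp_mono (μ := μ) (m := m)
      (f := fun ω => 2 * (q : ℝ) * ⟪g ω, S ω⟫)
      (g := fun ω => (q : ℝ) ^ 2 * ‖g ω‖ ^ 2 + ‖S ω‖ ^ 2)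
      (hinner.const_mul _) ((hg2.const_mul _).add hS2)
      (Filter.Eventually.of_forall (fun ω => by
        have h0 : (0:ℝ) ≤ ‖(q : ℝ) • g ω - S ω‖ ^ 2 := sq_nonneg _
        rw [norm_sub_sq_real, norm_smul, real_inner_smul_left] at h0
        simp only [Real.norm_eq_abs, mul_pow, sq_abs] at h0
        dsimp only
        linarith))
    have hL : μ[fun ω => 2 * (q : ℝ) * ⟪g ω, S ω⟫|m]
        =ᵐ[μ] fun ω => 2 * (q : ℝ) * N ω := by
      have := condExp_smul (μ := μ) (m := m) (2 * (q : ℝ)) (fun ω => ⟪g ω, S ω⟫)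
      exact this
    have hR : μ[fun ω => (q : ℝ) ^ 2 * ‖g ω‖ ^ 2 + ‖S ω‖ ^ 2|m]
        =ᵐ[μ] fun ω => (q : ℝ) ^ 2 * A ω + K ω := by
      have h1 := condExp_add (μ := μ) (m := m) (hg2.const_mul ((q : ℝ) ^ 2)) hS2
      have h2 := condExp_smul (μ := μ) (m := m) ((q : ℝ) ^ 2) (fun ω => ‖g ω‖ ^ 2)
      rw [show (fun ω => (q : ℝ) ^ 2 * ‖g ω‖ ^ 2 + ‖S ω‖ ^ 2)
        = ((fun ω => (q : ℝ) ^ 2 * ‖g ω‖ ^ 2) + fun ω => ‖S ω‖ ^ 2) from rfl]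
      refine h1.trans ?_
      filter_upwards [h2] with ω h2
      simp only [Pi.add_apply]
      rw [show (fun ω => (q : ℝ) ^ 2 * ‖g ω‖ ^ 2)
        = ((q : ℝ) ^ 2 • fun ω => ‖g ω‖ ^ 2) from rfl, h2]
      simp [smul_eq_mul, hA, hK]
    filter_upwards [hmono, hL, hR] with ω h1 h2 h3
    rw [h2, h3] at h1
    exact h1
  have hall : ∀ᵐ ω ∂μ, ∀ q : ℚ, 2 * (q : ℝ) * N ω ≤ (q : ℝ) ^ 2 * A ω + K ω :=
    (ae_all_iff).2 hq
  filter_upwards [hall] with ω hω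
  have hcont : Continuous fun x : ℝ => A ω * (x * x) + (-(2 * N ω)) * x + K ω := by
    continuity
  have hx : ∀ x : ℝ, 0 ≤ A ω * (x * x) + (-(2 * N ω)) * x + K ω := by
    intro x
    have hcl : IsClosed {y : ℝ | 0 ≤ A ω * (y * y) + (-(2 * N ω)) * y + K ω} :=
      isClosed_le continuous_const hcont
    have hsub : Set.range ((↑) : ℚ → ℝ) ⊆
        {y : ℝ | 0 ≤ A ω * (y * y) + (-(2 * N ω)) * y + K ω} := by
      rintro _ ⟨q, rfl⟩
      have := hω q
      simp only [Set.mem_setOf_eq]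
      nlinarith [this]
    have hmem : x ∈ closure (Set.range ((↑) : ℚ → ℝ)) := Rat.denseRange_cast x
    exact hcl.closure_subset_iff.2 hsub hmem
  have hd := discrim_le_zero hx
  rw [discrim] at hd
  nlinarith [hd]
end Helpers2

section Helpers3
variable {Ω : Type*} {m m0 : MeasurableSpace Ω} {μ : Measure Ω} [IsProbabilityMeasure μ]
variable {d : ℕ}

theorem my_betastar_integrable (hm : m ≤ m0) {g S : Ω → EuclideanSpace ℝ (Fin d)}
    (hg : MemLp g 2 μ) (hS : MemLp S 2 μ)
    (hpos : ∀ᵐ ω ∂μ, 0 < (μ[fun ω' => ‖S ω'‖ ^ 2|m]) ω) :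
    Integrable (fun ω =>
      ((μ[fun ω' => ⟪g ω', S ω'⟫|m]) ω / (μ[fun ω' => ‖S ω'‖ ^ 2|m]) ω) ^ 2
        * ‖S ω‖ ^ 2) μ := by
  set N := μ[fun ω' => ⟪g ω', S ω'⟫|m] with hN
  set A := μ[fun ω' => ‖g ω'‖ ^ 2|m] with hA
  set K := μ[fun ω' => ‖S ω'‖ ^ 2|m] with hK
  set β : Ω → ℝ := fun ω => N ω / K ω with hβ
  have hS2 : Integrable (fun ω => ‖S ω‖ ^ 2) μ :=
    (memLp_two_iff_integrable_sq_norm hS.aestronglyMeasurable).1 hS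
  have hKint : Integrable K μ := integrable_condExp
  have hAint : Integrable A μ := integrable_condExp
  have hβm : Measurable[m] β := by
    rw [hβ]
    exact stronglyMeasurable_condExp.measurable.div stronglyMeasurable_condExp.measurable
  have hβmeas : Measurable β := hβm.mono hm le_rfl
  have hcs := my_condexp_cs hm hg hS
  have hβ2K : ∀ᵐ ω ∂μ, β ω ^ 2 * K ω ≤ A ω := by
    filter_upwards [hcs, hpos] with ω h1 h2
    rw [hβ, div_pow, div_mul_eq_mul_div, div_le_iff₀ (by positivity)]
    nlinarith
  have hmeasMS : ∀ M : ℕ, AEStronglyMeasurable (fun ω => min (β ω ^ 2) (M : ℝ) * ‖S ω‖ ^ 2) μ := by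
    intro M
    exact (((hβmeas.pow_const 2).min measurable_const).aestronglyMeasurable).mul
      hS2.aestronglyMeasurable
  have hint1 : ∀ M : ℕ, Integrable (fun ω => min (β ω ^ 2) (M : ℝ) * ‖S ω‖ ^ 2) μ := by
    intro M
    refine (hS2.const_mul (M : ℝ)).mono' (hmeasMS M) ?_
    filter_upwards with ω
    rw [Real.norm_eq_abs, abs_of_nonneg (mul_nonneg (le_min (by positivity) (by positivity)) (by positivity))]
    exact mul_le_mul_of_nonneg_right (min_le_right _ _) (by positivity)
  have hint2 : ∀ M : ℕ, Integrable (fun ω => min (β ω ^ 2) (M : ℝ) * K ω) μ := by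
    intro M
    refine (hKint.abs.const_mul (M : ℝ)).mono'
      ((((hβmeas.pow_const 2).min measurable_const).aestronglyMeasurable).mul
        hKint.aestronglyMeasurable) ?_
    filter_upwards with ω
    rw [Real.norm_eq_abs, abs_mul]
    refine mul_le_mul ?_ le_rfl (abs_nonneg _) (by positivity)
    rw [abs_of_nonneg (le_min (by positivity) (by positivity))]
    exact min_le_right _ _
  have hCbound : ∀ M : ℕ, ∫ ω, min (β ω ^ 2) (M : ℝ) * ‖S ω‖ ^ 2 ∂μ ≤ ∫ ω, A ω ∂μ := by
    intro M
    have hsm : StronglyMeasurable[m] (fun ω => min (β ω ^ 2) (M : ℝ)) :=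
      (((hβm.pow_const 2).min measurable_const)).stronglyMeasurable
    rw [my_integral_pullout hm hsm hS2 (hint1 M)]
    refine integral_mono_ae (hint2 M) hAint ?_
    filter_upwards [hβ2K, hpos] with ω h1 h2
    calc min (β ω ^ 2) (M : ℝ) * K ω ≤ β ω ^ 2 * K ω :=
          mul_le_mul_of_nonneg_right (min_le_left _ _) h2.le
      _ ≤ A ω := h1
  have hnn : ∀ M : ℕ, (0 : Ω → ℝ) ≤ᵐ[μ] fun ω => min (β ω ^ 2) (M : ℝ) * ‖S ω‖ ^ 2 := by
    intro M
    filter_upwards with ω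
    simp only [Pi.zero_apply]
    exact mul_nonneg (le_min (by positivity) (by positivity)) (by positivity)
  have hmct := lintegral_tendsto_of_tendsto_of_monotone (μ := μ)
    (f := fun M ω => ENNReal.ofReal (min (β ω ^ 2) (M : ℝ) * ‖S ω‖ ^ 2))
    (F := fun ω => ENNReal.ofReal (β ω ^ 2 * ‖S ω‖ ^ 2))
    (fun M => ((hint1 M).aestronglyMeasurable.aemeasurable).ennreal_ofReal)
    (by
      filter_upwards with ω
      intro a b hab
      exact ENNReal.ofReal_le_ofReal (mul_le_mul_of_nonneg_right
        (min_le_min le_rfl (Nat.cast_le.2 hab)) (by positivity)))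
    (by
      filter_upwards with ω
      refine Filter.Tendsto.congr' ?_ tendsto_const_nhds
      filter_upwards [Filter.eventually_ge_atTop ⌈β ω ^ 2⌉₊] with M hM
      rw [min_eq_left ((Nat.le_ceil _).trans (Nat.cast_le.2 hM))])
  have hfin : ∫⁻ ω, ENNReal.ofReal (β ω ^ 2 * ‖S ω‖ ^ 2) ∂μ ≤ ENNReal.ofReal (∫ ω, A ω ∂μ) := by
    refine le_of_tendsto hmct (Filter.Eventually.of_forall fun M => ?_)
    rw [← ofReal_integral_eq_lintegral_ofReal (hint1 M) (hnn M)]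
    exact ENNReal.ofReal_le_ofReal (hCbound M)
  refine ⟨((hβmeas.pow_const 2).aestronglyMeasurable).mul hS2.aestronglyMeasurable, ?_⟩
  rw [hasFiniteIntegral_iff_ofReal (by filter_upwards with ω; positivity)]
  exact hfin.trans_lt ENNReal.ofReal_lt_top
end Helpers3

section Helpers4
variable {Ω : Type*} {m0 : MeasurableSpace Ω} {μ : Measure Ω} [IsProbabilityMeasure μ]
variable {d : ℕ}

theorem my_clamp_abs_le (x M : ℝ) (hM : 0 ≤ M) : |max (-M) (min x M)| ≤ |x| := by
  rcases le_total x 0 with hx | hx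
  · rw [min_eq_left (hx.trans hM), abs_of_nonpos (max_le (neg_nonpos.2 hM) hx),
      abs_of_nonpos hx, neg_le_neg_iff]
    exact le_max_right _ _
  · rw [max_eq_right ((neg_nonpos.2 hM).trans (le_min hx hM)),
      abs_of_nonneg (le_min hx hM), abs_of_nonneg hx]
    exact min_le_left _ _

theorem my_F2 {mi mj : MeasurableSpace Ω} (hmi : mi ≤ m0) (hmj : mj ≤ m0)
    {Si Sj : Ω → EuclideanSpace ℝ (Fin d)} (hSi : MemLp Si 2 μ) (hSj : MemLp Sj 2 μ)
    {c e : Ω → ℝ} (hc : Measurable[mi] c)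
    (hcint : Integrable (fun ω => (c ω) ^ 2 * ‖Si ω‖ ^ 2) μ)
    (he : Measurable[mj] e)
    (heint : Integrable (fun ω => (e ω) ^ 2 * ‖Sj ω‖ ^ 2) μ)
    (horth : ∀ β : Ω → ℝ, Measurable[mi] β → (∃ C : ℝ, ∀ ω, |β ω| ≤ C) →
      μ[fun ω => β ω * ⟪Si ω, Sj ω⟫|mj] =ᵐ[μ] 0) :
    ∫ ω, c ω * e ω * ⟪Si ω, Sj ω⟫ ∂μ = 0 := by
  have hcm : AEStronglyMeasurable[m0] c μ := (hc.mono hmi le_rfl).aestronglyMeasurable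
  have hem : AEStronglyMeasurable[m0] e μ := (he.mono hmj le_rfl).aestronglyMeasurable
  have hinner : Integrable (fun ω => ⟪Si ω, Sj ω⟫) μ := my_integrable_inner hSi hSj
  have hSi2 : Integrable (fun ω => ‖Si ω‖ ^ 2) μ :=
    (memLp_two_iff_integrable_sq_norm hSi.aestronglyMeasurable).1 hSi
  set cM : ℕ → Ω → ℝ := fun M ω => max (-(M : ℝ)) (min (c ω) (M : ℝ)) with hcM
  have hcM_meas : ∀ M, Measurable[mi] (cM M) :=
    fun M => measurable_const.max (hc.min measurable_const)
  have hcM_bdd : ∀ M : ℕ, ∀ ω, |cM M ω| ≤ (M : ℝ) := by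
    intro M ω
    rw [abs_le]
    exact ⟨le_max_left _ _, max_le (neg_le_self (by positivity)) (min_le_right _ _)⟩
  have hcM_abs : ∀ M : ℕ, ∀ ω, |cM M ω| ≤ |c ω| :=
    fun M ω => my_clamp_abs_le (c ω) (M : ℝ) (by positivity)
  -- each truncated integral vanishes
  have hzeroM : ∀ M : ℕ, ∫ ω, e ω * (cM M ω * ⟪Si ω, Sj ω⟫) ∂μ = 0 := by
    intro M
    have hzero := horth (cM M) (hcM_meas M) ⟨(M : ℝ), hcM_bdd M⟩
    have hfmeas : AEStronglyMeasurable[m0] (fun ω => cM M ω * ⟪Si ω, Sj ω⟫) μ :=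
      (((hcM_meas M).mono hmi le_rfl).aestronglyMeasurable).mul hinner.aestronglyMeasurable
    have hfint : Integrable (fun ω => cM M ω * ⟪Si ω, Sj ω⟫) μ := by
      refine (hinner.abs.const_mul (M : ℝ)).mono' hfmeas ?_
      filter_upwards with ω
      rw [Real.norm_eq_abs, abs_mul]
      exact mul_le_mul_of_nonneg_right (hcM_bdd M ω) (abs_nonneg _)
    have hcMint : Integrable (fun ω => (cM M ω) ^ 2 * ‖Si ω‖ ^ 2) μ := by
      refine hcint.mono' ((((hcM_meas M).mono hmi le_rfl).pow_const 2).aestronglyMeasurable.mul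
        hSi2.aestronglyMeasurable) ?_
      filter_upwards with ω
      rw [Real.norm_eq_abs, abs_of_nonneg (by positivity)]
      refine mul_le_mul_of_nonneg_right ?_ (by positivity)
      rw [← sq_abs (cM M ω), ← sq_abs (c ω)]
      exact pow_le_pow_left₀ (abs_nonneg _) (hcM_abs M ω) 2
    have hprod : Integrable (fun ω => e ω * (cM M ω * ⟪Si ω, Sj ω⟫)) μ := by
      refine (my_integrable_weighted (((hcM_meas M).mono hmi le_rfl).aestronglyMeasurable) hem
        hSi.aestronglyMeasurable hSj.aestronglyMeasurable hcMint heint).congr ?_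
      filter_upwards with ω; ring
    rw [my_integral_pullout hmj (he.stronglyMeasurable) hfint hprod]
    rw [show (0 : ℝ) = ∫ ω, e ω * (0 : Ω → ℝ) ω ∂μ by simp]
    exact integral_congr_ae (by filter_upwards [hzero] with ω h; rw [h])
  -- dominated convergence
  have hbound_int : Integrable (fun ω => |c ω| * |e ω| * (‖Si ω‖ * ‖Sj ω‖)) μ := by
    refine ((hcint.add heint).const_mul (1/2 : ℝ)).mono'
      (((hcm.norm.mul hem.norm).mul (hSi.aestronglyMeasurable.norm.mul
        hSj.aestronglyMeasurable.norm)).congr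
        (by filter_upwards with ω; simp [Real.norm_eq_abs])) ?_
    filter_upwards with ω
    rw [Real.norm_eq_abs, abs_of_nonneg (by positivity)]
    simp only [Pi.add_apply]
    nlinarith [sq_nonneg (|c ω| * ‖Si ω‖ - |e ω| * ‖Sj ω‖), abs_nonneg (c ω), abs_nonneg (e ω),
      norm_nonneg (Si ω), norm_nonneg (Sj ω), sq_abs (c ω), sq_abs (e ω)]
  have htend := tendsto_integral_of_dominated_convergence
    (F := fun M ω => e ω * (cM M ω * ⟪Si ω, Sj ω⟫))
    (f := fun ω => e ω * (c ω * ⟪Si ω, Sj ω⟫))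
    (bound := fun ω => |c ω| * |e ω| * (‖Si ω‖ * ‖Sj ω‖))
    (fun M => hem.mul ((((hcM_meas M).mono hmi le_rfl).aestronglyMeasurable).mul
      hinner.aestronglyMeasurable))
    hbound_int
    (fun M => by
      filter_upwards with ω
      rw [Real.norm_eq_abs, abs_mul, abs_mul]
      calc |e ω| * (|cM M ω| * |⟪Si ω, Sj ω⟫|)
          ≤ |e ω| * (|c ω| * (‖Si ω‖ * ‖Sj ω‖)) := by
            refine mul_le_mul_of_nonneg_left (mul_le_mul (hcM_abs M ω)
              (abs_real_inner_le_norm _ _) (abs_nonneg _) (abs_nonneg _)) (abs_nonneg _)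
        _ = |c ω| * |e ω| * (‖Si ω‖ * ‖Sj ω‖) := by ring)
    (by
      filter_upwards with ω
      refine Filter.Tendsto.congr' ?_ tendsto_const_nhds
      filter_upwards [Filter.eventually_ge_atTop ⌈|c ω|⌉₊] with M hM
      have hMc : |c ω| ≤ (M : ℝ) := (Nat.le_ceil _).trans (Nat.cast_le.2 hM)
      rw [abs_le] at hMc
      have hceq : cM M ω = c ω := by
        show max (-(M : ℝ)) (min (c ω) (M : ℝ)) = c ω
        rw [min_eq_left hMc.2]
        exact max_eq_right hMc.1
      show e ω * (c ω * ⟪Si ω, Sj ω⟫) = e ω * (cM M ω * ⟪Si ω, Sj ω⟫)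
      rw [hceq])
  rw [show (fun M : ℕ => ∫ ω, e ω * (cM M ω * ⟪Si ω, Sj ω⟫) ∂μ) = fun _ => (0:ℝ) from
    funext hzeroM] at htend
  have h0 := tendsto_nhds_unique htend tendsto_const_nhds
  calc ∫ ω, c ω * e ω * ⟪Si ω, Sj ω⟫ ∂μ
      = ∫ ω, e ω * (c ω * ⟪Si ω, Sj ω⟫) ∂μ := by
        refine integral_congr_ae ?_
        filter_upwards with ω; ring
    _ = 0 := h0

end Helpers4

section Helpers5
variable {Ω : Type*} {m m0 : MeasurableSpace Ω} {μ : Measure Ω} [IsProbabilityMeasure μ]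
variable {d : ℕ}

theorem my_F1 (hm : m ≤ m0) {g S : Ω → EuclideanSpace ℝ (Fin d)}
    (hg : MemLp g 2 μ) (hS : MemLp S 2 μ)
    (hpos : ∀ᵐ ω ∂μ, 0 < (μ[fun ω' => ‖S ω'‖ ^ 2|m]) ω)
    {c : Ω → ℝ} (hc : Measurable[m] c)
    (hcint : Integrable (fun ω => (c ω) ^ 2 * ‖S ω‖ ^ 2) μ) :
    ∫ ω, c ω * ⟪g ω, S ω⟫ ∂μ =
      ∫ ω, c ω * ((μ[fun ω' => ⟪g ω', S ω'⟫|m]) ω / (μ[fun ω' => ‖S ω'‖ ^ 2|m]) ω)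
        * ‖S ω‖ ^ 2 ∂μ := by
  have hβint := my_betastar_integrable hm hg hS hpos
  set N := μ[fun ω' => ⟪g ω', S ω'⟫|m] with hN
  set K := μ[fun ω' => ‖S ω'‖ ^ 2|m] with hK
  set β : Ω → ℝ := fun ω => N ω / K ω with hβ
  have hβm : Measurable[m] β := by
    rw [hβ]
    exact stronglyMeasurable_condExp.measurable.div stronglyMeasurable_condExp.measurable
  have hβaesm : AEStronglyMeasurable β μ := ((hβm.mono hm le_rfl)).aestronglyMeasurable
  have hcm : AEStronglyMeasurable c μ := (hc.mono hm le_rfl).aestronglyMeasurable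
  have hS2 : Integrable (fun ω => ‖S ω‖ ^ 2) μ :=
    (memLp_two_iff_integrable_sq_norm hS.aestronglyMeasurable).1 hS
  have hg2 : Integrable (fun ω => ‖g ω‖ ^ 2) μ :=
    (memLp_two_iff_integrable_sq_norm hg.aestronglyMeasurable).1 hg
  have hinner : Integrable (fun ω => ⟪g ω, S ω⟫) μ := my_integrable_inner hg hS
  have h1g : Integrable (fun ω => ((1:ℝ)) ^ 2 * ‖g ω‖ ^ 2) μ := by simpa using hg2
  have step1 : Integrable (fun ω => c ω * ⟪g ω, S ω⟫) μ := by
    refine (my_integrable_weighted hcm aestronglyMeasurable_const hS.aestronglyMeasurable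
      hg.aestronglyMeasurable hcint h1g).congr ?_
    filter_upwards with ω
    rw [real_inner_comm]; ring
  have step2 : ∫ ω, c ω * ⟪g ω, S ω⟫ ∂μ = ∫ ω, c ω * N ω ∂μ := by
    exact my_integral_pullout hm hc.stronglyMeasurable hinner step1
  have step3 : Integrable (fun ω => (c ω * β ω) * ‖S ω‖ ^ 2) μ := by
    refine (my_integrable_weighted hcm hβaesm hS.aestronglyMeasurable hS.aestronglyMeasurable
      hcint hβint).congr ?_
    filter_upwards with ω
    rw [real_inner_self_eq_norm_sq]
  have step4 : ∫ ω, (c ω * β ω) * ‖S ω‖ ^ 2 ∂μ = ∫ ω, (c ω * β ω) * K ω ∂μ := by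
    exact my_integral_pullout hm (hc.mul hβm).stronglyMeasurable hS2 step3
  have step5 : ∫ ω, (c ω * β ω) * K ω ∂μ = ∫ ω, c ω * N ω ∂μ := by
    refine integral_congr_ae ?_
    filter_upwards [hpos] with ω h
    rw [hβ, mul_assoc, div_mul_cancel₀ _ (ne_of_gt h)]
  calc ∫ ω, c ω * ⟪g ω, S ω⟫ ∂μ = ∫ ω, c ω * N ω ∂μ := step2
    _ = ∫ ω, (c ω * β ω) * K ω ∂μ := step5.symm
    _ = ∫ ω, (c ω * β ω) * ‖S ω‖ ^ 2 ∂μ := step4.symm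
    _ = ∫ ω, c ω * (N ω / K ω) * ‖S ω‖ ^ 2 ∂μ := rfl

end Helpers5


/-- Theorem 1 of the paper (optimal state-dependent baselines), abstract form.
Given score vectors `S i` with sub-σ-algebras `𝒢 i`, coefficients `F i`, the
cross-term orthogonality conditions, and a.s. positive conditional second
moments, the baselines `βᵢ* = E[⟪ĝ_sf, Sᵢ⟫ | 𝒢ᵢ] / E[‖Sᵢ‖² | 𝒢ᵢ]` (with
`ĝ_sf = ∑ᵢ Fᵢ Sᵢ`) minimize the second moment of the baselined estimator
over all choices of 𝒢ᵢ-measurable baselines `bᵢ`. -/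
theorem optimal_baselines_minimize_second_moment
    {Ω : Type*} [m0 : MeasurableSpace Ω] (μ : Measure Ω) [IsProbabilityMeasure μ]
    (n : ℕ) (𝒢 : Fin n → MeasurableSpace Ω) (h𝒢 : ∀ i, 𝒢 i ≤ m0)
    {d : ℕ} (S : Fin n → Ω → EuclideanSpace ℝ (Fin d))
    (hS : ∀ i, MemLp (S i) 2 μ)
    (F : Fin n → Ω → ℝ) (hFmeas : ∀ i, Measurable (F i))
    (hF : ∀ i, Integrable (fun ω => (F i ω) ^ 2 * ‖S i ω‖ ^ 2) μ)
    -- cross-term orthogonality: for `i ≠ j` and any bounded `𝒢 i`-measurable β,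
    -- `E[β ⟪Sᵢ, Sⱼ⟫ | 𝒢 j] = 0` a.s.
    (horth : ∀ i j, i ≠ j → ∀ β : Ω → ℝ, Measurable[𝒢 i] β →
      (∃ C : ℝ, ∀ ω, |β ω| ≤ C) →
      μ[fun ω => β ω * ⟪S i ω, S j ω⟫ | 𝒢 j] =ᵐ[μ] 0)
    (hpos : ∀ i, ∀ᵐ ω ∂μ, 0 < (μ[fun ω' => ‖S i ω'‖ ^ 2 | 𝒢 i]) ω)
    (gsf : Ω → EuclideanSpace ℝ (Fin d)) (hgsf : gsf = fun ω => ∑ i, F i ω • S i ω)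
    (βstar : Fin n → Ω → ℝ)
    (hβstar : ∀ i, βstar i = fun ω =>
      (μ[fun ω' => ⟪gsf ω', S i ω'⟫ | 𝒢 i]) ω /
        (μ[fun ω' => ‖S i ω'‖ ^ 2 | 𝒢 i]) ω) :
    ∀ b : Fin n → Ω → ℝ, (∀ i, Measurable[𝒢 i] (b i)) →
      (∀ i, Integrable (fun ω => (b i ω) ^ 2 * ‖S i ω‖ ^ 2) μ) →
      (∫ ω, ‖∑ i, (F i ω - βstar i ω) • S i ω‖ ^ 2 ∂μ) ≤
        ∫ ω, ‖∑ i, (F i ω - b i ω) • S i ω‖ ^ 2 ∂μ := by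
  intro b hbmeas hbint
  -- basic L² facts
  have hgL2 : MemLp gsf 2 μ := by
    rw [hgsf]
    exact memLp_finset_sum Finset.univ fun i _ =>
      my_memL2_smul (hFmeas i).aestronglyMeasurable (hS i).aestronglyMeasurable (hF i)
  have hβm : ∀ i, Measurable[𝒢 i] (βstar i) := by
    intro i
    rw [hβstar i]
    exact stronglyMeasurable_condExp.measurable.div stronglyMeasurable_condExp.measurable
  have hβaesm : ∀ i, AEStronglyMeasurable (βstar i) μ :=
    fun i => ((hβm i).mono (h𝒢 i) le_rfl).aestronglyMeasurable
  have hbaesm : ∀ i, AEStronglyMeasurable (b i) μ :=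
    fun i => ((hbmeas i).mono (h𝒢 i) le_rfl).aestronglyMeasurable
  have hβint : ∀ i, Integrable (fun ω => (βstar i ω) ^ 2 * ‖S i ω‖ ^ 2) μ := by
    intro i
    have := my_betastar_integrable (h𝒢 i) hgL2 (hS i) (hpos i)
    refine this.congr ?_
    filter_upwards with ω
    rw [hβstar i]
  -- the deviations δ i
  set δ : Fin n → Ω → ℝ := fun i ω => βstar i ω - b i ω with hδ
  have hδm : ∀ i, Measurable[𝒢 i] (δ i) := fun i => (hβm i).sub (hbmeas i)
  have hδaesm : ∀ i, AEStronglyMeasurable (δ i) μ :=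
    fun i => ((hδm i).mono (h𝒢 i) le_rfl).aestronglyMeasurable
  have hδint : ∀ i, Integrable (fun ω => (δ i ω) ^ 2 * ‖S i ω‖ ^ 2) μ := by
    intro i
    refine (((hβint i).add (hbint i)).const_mul 2).mono'
      (((((hδm i).mono (h𝒢 i) le_rfl).pow_const 2).aestronglyMeasurable).mul
        ((memLp_two_iff_integrable_sq_norm (hS i).aestronglyMeasurable).1
          (hS i)).aestronglyMeasurable) ?_
    filter_upwards with ω
    rw [Real.norm_eq_abs, abs_of_nonneg (by positivity)]
    simp only [Pi.add_apply]
    have hde : δ i ω = βstar i ω - b i ω := rfl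
    rw [hde]
    nlinarith [sq_nonneg (βstar i ω + b i ω), sq_nonneg (βstar i ω - b i ω),
      sq_nonneg ‖S i ω‖, norm_nonneg (S i ω)]
  -- L² membership of building blocks
  have hβS : ∀ i, MemLp (fun ω => βstar i ω • S i ω) 2 μ :=
    fun i => my_memL2_smul (hβaesm i) (hS i).aestronglyMeasurable (hβint i)
  have hbS : ∀ i, MemLp (fun ω => b i ω • S i ω) 2 μ :=
    fun i => my_memL2_smul (hbaesm i) (hS i).aestronglyMeasurable (hbint i)
  have hFS : ∀ i, MemLp (fun ω => F i ω • S i ω) 2 μ :=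
    fun i => my_memL2_smul (hFmeas i).aestronglyMeasurable (hS i).aestronglyMeasurable (hF i)
  set R : Ω → EuclideanSpace ℝ (Fin d) := fun ω => ∑ i, (F i ω - βstar i ω) • S i ω with hR
  set D : Ω → EuclideanSpace ℝ (Fin d) := fun ω => ∑ i, δ i ω • S i ω with hD
  have hRL2 : MemLp R 2 μ := by
    rw [hR]
    refine memLp_finset_sum Finset.univ fun i _ => MemLp.ae_eq ?_ ((hFS i).sub (hβS i))
    filter_upwards with ω
    simp only [Pi.sub_apply]
    rw [sub_smul]
  have hDL2 : MemLp D 2 μ := by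
    rw [hD]
    exact memLp_finset_sum Finset.univ fun i _ =>
      my_memL2_smul (hδaesm i) (hS i).aestronglyMeasurable (hδint i)
  have hRsq : Integrable (fun ω => ‖R ω‖ ^ 2) μ :=
    (memLp_two_iff_integrable_sq_norm hRL2.aestronglyMeasurable).1 hRL2
  have hDsq : Integrable (fun ω => ‖D ω‖ ^ 2) μ :=
    (memLp_two_iff_integrable_sq_norm hDL2.aestronglyMeasurable).1 hDL2
  have hRDint : Integrable (fun ω => ⟪R ω, D ω⟫) μ := my_integrable_inner hRL2 hDL2
  -- decomposition of R against S i
  have hRinner : ∀ i, ∀ ω, ⟪R ω, S i ω⟫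
      = ⟪gsf ω, S i ω⟫ - ∑ j, βstar j ω * ⟪S j ω, S i ω⟫ := by
    intro i ω
    have : R ω = gsf ω - ∑ j, βstar j ω • S j ω := by
      show (∑ j, (F j ω - βstar j ω) • S j ω) = _
      calc ∑ j, (F j ω - βstar j ω) • S j ω
          = ∑ j, (F j ω • S j ω - βstar j ω • S j ω) :=
            Finset.sum_congr rfl fun j _ => sub_smul _ _ _
        _ = (∑ j, F j ω • S j ω) - ∑ j, βstar j ω • S j ω := Finset.sum_sub_distrib _ _
        _ = gsf ω - ∑ j, βstar j ω • S j ω := by simp only [hgsf]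
    rw [this, inner_sub_left, sum_inner]
    congr 1
    exact Finset.sum_congr rfl fun j _ => real_inner_smul_left _ _ _
  -- integrability of the pieces
  have hδg_int : ∀ i, Integrable (fun ω => δ i ω * ⟪gsf ω, S i ω⟫) μ := by
    intro i
    have h1g : Integrable (fun ω => ((1:ℝ)) ^ 2 * ‖gsf ω‖ ^ 2) μ := by
      simpa using (memLp_two_iff_integrable_sq_norm hgL2.aestronglyMeasurable).1 hgL2
    refine (my_integrable_weighted (hδaesm i) aestronglyMeasurable_const
      (hS i).aestronglyMeasurable hgL2.aestronglyMeasurable (hδint i) h1g).congr ?_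
    filter_upwards with ω
    rw [real_inner_comm]; ring
  have hδβ_int : ∀ i j, Integrable (fun ω => δ i ω * (βstar j ω * ⟪S j ω, S i ω⟫)) μ := by
    intro i j
    refine (my_integrable_weighted (hδaesm i) (hβaesm j) (hS i).aestronglyMeasurable
      (hS j).aestronglyMeasurable (hδint i) (hβint j)).congr ?_
    filter_upwards with ω
    rw [real_inner_comm]; ring
  -- each cross term vanishes
  have hkey : ∀ i, ∫ ω, δ i ω * ⟪R ω, S i ω⟫ ∂μ = 0 := by
    intro i
    have hsplit : ∫ ω, δ i ω * ⟪R ω, S i ω⟫ ∂μ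
        = (∫ ω, δ i ω * ⟪gsf ω, S i ω⟫ ∂μ)
          - ∑ j, ∫ ω, δ i ω * (βstar j ω * ⟪S j ω, S i ω⟫) ∂μ := by
      rw [← integral_finset_sum Finset.univ fun j _ => hδβ_int i j]
      rw [← integral_sub (hδg_int i) (integrable_finset_sum Finset.univ fun j _ => hδβ_int i j)]
      refine integral_congr_ae ?_
      filter_upwards with ω
      rw [hRinner i ω, mul_sub, Finset.mul_sum]
    rw [hsplit]
    have hF1 : ∫ ω, δ i ω * ⟪gsf ω, S i ω⟫ ∂μ
        = ∫ ω, δ i ω * (βstar i ω * ⟪S i ω, S i ω⟫) ∂μ := by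
      have := my_F1 (h𝒢 i) hgL2 (hS i) (hpos i) (hδm i) (hδint i)
      rw [this]
      refine integral_congr_ae ?_
      filter_upwards with ω
      rw [hβstar i, real_inner_self_eq_norm_sq]
      ring
    have hjsum : ∀ j, j ≠ i → ∫ ω, δ i ω * (βstar j ω * ⟪S j ω, S i ω⟫) ∂μ = 0 := by
      intro j hij
      have := my_F2 (h𝒢 i) (h𝒢 j) (hS i) (hS j) (hδm i) (hδint i) (hβm j) (hβint j)
        (fun β hβ hbd => horth i j (fun h => hij h.symm) β hβ hbd)
      rw [← this]
      refine integral_congr_ae ?_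
      filter_upwards with ω
      rw [real_inner_comm]; ring
    rw [Finset.sum_eq_single i (fun j _ hj => hjsum j hj) (by simp)]
    rw [hF1]
    ring
  -- total cross term vanishes
  have hcross : ∫ ω, ⟪R ω, D ω⟫ ∂μ = 0 := by
    have hexp : ∀ ω, ⟪R ω, D ω⟫ = ∑ i, δ i ω * ⟪R ω, S i ω⟫ := by
      intro ω
      rw [hD, inner_sum]
      exact Finset.sum_congr rfl fun i _ => real_inner_smul_right _ _ _
    have hterm : ∀ i, Integrable (fun ω => δ i ω * ⟪R ω, S i ω⟫) μ := by
      intro i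
      refine (my_integrable_inner hRL2 (my_memL2_smul (hδaesm i)
        (hS i).aestronglyMeasurable (hδint i))).congr ?_
      filter_upwards with ω
      rw [real_inner_smul_right]
    calc ∫ ω, ⟪R ω, D ω⟫ ∂μ = ∫ ω, ∑ i, δ i ω * ⟪R ω, S i ω⟫ ∂μ :=
          integral_congr_ae (by filter_upwards with ω; rw [hexp ω])
      _ = ∑ i, ∫ ω, δ i ω * ⟪R ω, S i ω⟫ ∂μ := integral_finset_sum _ fun i _ => hterm i
      _ = 0 := Finset.sum_eq_zero fun i _ => hkey i
  -- final assembly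
  have hdecomp : ∀ ω, ∑ i, (F i ω - b i ω) • S i ω = R ω + D ω := by
    intro ω
    rw [hR, hD, ← Finset.sum_add_distrib]
    refine Finset.sum_congr rfl fun i _ => ?_
    rw [← add_smul]
    congr 1
    rw [hδ]
    ring
  calc ∫ ω, ‖∑ i, (F i ω - βstar i ω) • S i ω‖ ^ 2 ∂μ
      = ∫ ω, ‖R ω‖ ^ 2 ∂μ := rfl
    _ ≤ ∫ ω, ‖R ω‖ ^ 2 ∂μ + (2 * ∫ ω, ⟪R ω, D ω⟫ ∂μ + ∫ ω, ‖D ω‖ ^ 2 ∂μ) := by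
        rw [hcross]
        have : 0 ≤ ∫ ω, ‖D ω‖ ^ 2 ∂μ := integral_nonneg fun ω => by positivity
        linarith
    _ = ∫ ω, ‖R ω‖ ^ 2 + (2 * ⟪R ω, D ω⟫ + ‖D ω‖ ^ 2) ∂μ := by
        have h2 : Integrable (fun ω => 2 * ⟪R ω, D ω⟫ + ‖D ω‖ ^ 2) μ :=
          (hRDint.const_mul 2).add hDsq
        rw [integral_add hRsq h2, integral_add (hRDint.const_mul 2) hDsq, integral_const_mul]
    _ = ∫ ω, ‖R ω + D ω‖ ^ 2 ∂μ := by
        refine integral_congr_ae ?_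
        filter_upwards with ω
        rw [norm_add_sq_real]; ring
    _ = ∫ ω, ‖∑ i, (F i ω - b i ω) • S i ω‖ ^ 2 ∂μ := by
        refine integral_congr_ae ?_
        filter_upwards with ω
        rw [hdecomp ω]
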